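/- Let A be a right-closed V-action and B a left-closed V-action. For every object X of A, the evaluation-at-X functor E_X : St(A,B) → B, (F,φ) ↦ FX, has a right adjoint, the clone functor ⟨X,−⟩ : B → St(A,B), sending Y to the functor A ↦ ⟦A̲(A,X),Y⟧ equipped with the clone strength (whose component at (V,A) is the transpose of the composite of α⁻¹, the action of the map A̲(V ⊳ A,X) ⊗ V → A̲(A,X) (itself the transpose of ev ∘ α), and the evaluation A̲(A,X) ⊳ ⟦A̲(A,X),Y⟧ → Y). -/

import Mathlib

open CategoryTheory MonoidalCategory Limits

universe w v₁ v₂ v₃ u₁ u₂ u₃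

namespace MonEq

variable (V : Type u₁) [Category.{v₁} V] [MonoidalCategory V]
variable (C : Type u₂) [Category.{v₂} C]

/-- An action of a monoidal category `V` on a category `C`, with coherence
isomorphisms `lam : I ⊳ c ≅ c` and `assoc : (u ⊗ v) ⊳ c ≅ u ⊳ (v ⊳ c)`. -/
structure MonAction where
  act : V ⥤ C ⥤ C
  lam : act.obj (𝟙_ V) ≅ 𝟭 C
  assoc : ∀ u v : V, act.obj (u ⊗ v) ≅ act.obj v ⋙ act.obj u
  assoc_natural :
    ∀ {u u' v v' : V} (f : u ⟶ u') (g : v ⟶ v') (c : C),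
      (act.map (f ⊗ₘ g)).app c ≫ (assoc u' v').hom.app c =
        (assoc u v).hom.app c ≫ (act.map f).app ((act.obj v).obj c) ≫
          (act.obj u').map ((act.map g).app c)
  triangle_left :
    ∀ (v : V) (c : C),
      (assoc (𝟙_ V) v).hom.app c ≫ lam.hom.app ((act.obj v).obj c) =
        (act.map (λ_ v).hom).app c
  triangle_right :
    ∀ (v : V) (c : C),
      (assoc v (𝟙_ V)).hom.app c ≫ (act.obj v).map (lam.hom.app c) =
        (act.map (ρ_ v).hom).app c
  pentagon :
    ∀ (u v w : V) (c : C),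
      (act.map (α_ u v w).hom).app c ≫ (assoc u (v ⊗ w)).hom.app c ≫
          (act.obj u).map ((assoc v w).hom.app c) =
        (assoc (u ⊗ v) w).hom.app c ≫ (assoc u v).hom.app ((act.obj w).obj c)

variable {V C}

/-- A right-closed structure on a `V`-action: each functor `(-) ⊳ c : V ⥤ C`
has a right adjoint `rhom c = C̲(c,-) : C ⥤ V`. -/
structure RightClosed (A : MonAction V C) where
  rhom : C → C ⥤ V
  adj : ∀ c : C, A.act.flip.obj c ⊣ rhom c

/-- A left-closed structure on a `V`-action: each functor `v ⊳ (-) : C ⥤ C`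
has a right adjoint `lhom v = ⟦v,-⟧ : C ⥤ C`. -/
structure LeftClosed (A : MonAction V C) where
  lhom : V → C ⥤ C
  adj : ∀ v : V, A.act.obj v ⊣ lhom v

variable {A : MonAction V C}

/-- Evaluation (counit) `ev_{a,x} : C̲(a,x) ⊳ a ⟶ x` of the right-closed structure. -/
def RightClosed.ev (R : RightClosed A) (a x : C) :
    (A.act.obj ((R.rhom a).obj x)).obj a ⟶ x :=
  (R.adj a).counit.app x

/-- Evaluation (counit) `ev_{v,x} : v ⊳ ⟦v,x⟧ ⟶ x` of the left-closed structure. -/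
def LeftClosed.ev (L : LeftClosed A) (v : V) (x : C) :
    (A.act.obj v).obj ((L.lhom v).obj x) ⟶ x :=
  (L.adj v).counit.app x

/-- Contravariant functorial action `C̲(f,x) : C̲(b,x) ⟶ C̲(a,x)` of the right-homs. -/
def RightClosed.rmap (R : RightClosed A) {a b : C} (f : a ⟶ b) (x : C) :
    (R.rhom b).obj x ⟶ (R.rhom a).obj x :=
  ((R.adj a).homEquiv _ x) ((A.act.obj ((R.rhom b).obj x)).map f ≫ R.ev b x)

/-- Contravariant functorial action `⟦h,x⟧ : ⟦w,x⟧ ⟶ ⟦v,x⟧` of the left-homs. -/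
def LeftClosed.lmap (L : LeftClosed A) {v w : V} (h : v ⟶ w) (x : C) :
    (L.lhom w).obj x ⟶ (L.lhom v).obj x :=
  ((L.adj v).homEquiv _ x) ((A.act.map h).app ((L.lhom w).obj x) ≫ L.ev w x)

variable (A) in
/-- A strong endofunctor on a `V`-action. -/
structure StrongEndo where
  F : C ⥤ C
  str : ∀ v : V, F ⋙ A.act.obj v ⟶ A.act.obj v ⋙ F
  str_natural :
    ∀ {v w : V} (h : v ⟶ w) (c : C),
      (A.act.map h).app (F.obj c) ≫ (str w).app c =
        (str v).app c ≫ F.map ((A.act.map h).app c)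
  str_lam :
    ∀ c : C,
      (str (𝟙_ V)).app c ≫ F.map (A.lam.hom.app c) = A.lam.hom.app (F.obj c)
  str_assoc :
    ∀ (u v : V) (c : C),
      (str (u ⊗ v)).app c ≫ F.map ((A.assoc u v).hom.app c) =
        (A.assoc u v).hom.app (F.obj c) ≫ (A.act.obj u).map ((str v).app c) ≫
          (str u).app ((A.act.obj v).obj c)

/-- Strong natural transformations between strong endofunctors. -/
def IsStrongHom (F G : StrongEndo A) (τ : F.F ⟶ G.F) : Prop :=
  ∀ (v : V) (c : C),
    (A.act.obj v).map (τ.app c) ≫ (G.str v).app c =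
      (F.str v).app c ≫ τ.app ((A.act.obj v).obj c)

variable (A) in
/-- A strong monad on a `V`-action: a strong endofunctor with a compatible
monad structure. -/
structure StrongMonad extends StrongEndo A where
  unit : 𝟭 C ⟶ F
  mul : F ⋙ F ⟶ F
  left_unit : ∀ c : C, unit.app (F.obj c) ≫ mul.app c = 𝟙 (F.obj c)
  right_unit : ∀ c : C, F.map (unit.app c) ≫ mul.app c = 𝟙 (F.obj c)
  mul_assoc' : ∀ c : C, F.map (mul.app c) ≫ mul.app c = mul.app (F.obj c) ≫ mul.app c
  unit_str :
    ∀ (v : V) (c : C),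
      (A.act.obj v).map (unit.app c) ≫ (str v).app c = unit.app ((A.act.obj v).obj c)
  mul_str :
    ∀ (v : V) (c : C),
      (str v).app (F.obj c) ≫ F.map ((str v).app c) ≫ mul.app ((A.act.obj v).obj c) =
        (A.act.obj v).map (mul.app c) ≫ (str v).app c

/-- The interpretation map `ι(s)_a : C̲(a,X) ⊳ T a ⟶ X` determined by a strength `σ`
and a `T`-algebra `s : T X ⟶ X`. -/
def interpMap (R : RightClosed A) (T : C ⥤ C)
    (σ : ∀ v : V, T ⋙ A.act.obj v ⟶ A.act.obj v ⋙ T)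
    {X : C} (s : T.obj X ⟶ X) (a : C) :
    (A.act.obj ((R.rhom a).obj X)).obj (T.obj a) ⟶ X :=
  (σ ((R.rhom a).obj X)).app a ≫ T.map (R.ev a X) ≫ s

/-- The interpretation `⟦t⟧_{(X,s)} : C̲(a,X) ⊳ c ⟶ X` of a Kleisli map `t : c ⟶ T a`. -/
def interp (R : RightClosed A) (T : C ⥤ C)
    (σ : ∀ v : V, T ⋙ A.act.obj v ⟶ A.act.obj v ⋙ T)
    {X : C} (s : T.obj X ⟶ X) {c a : C} (t : c ⟶ T.obj a) :
    (A.act.obj ((R.rhom a).obj X)).obj c ⟶ X :=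
  (A.act.obj ((R.rhom a).obj X)).map t ≫ interpMap R T σ s a

/-- Satisfaction of an equation `u ≡ v : c ⟶ T a` by an algebra `(X,s)`. -/
def Satisfies (R : RightClosed A) (T : C ⥤ C)
    (σ : ∀ v : V, T ⋙ A.act.obj v ⟶ A.act.obj v ⋙ T)
    {X : C} (s : T.obj X ⟶ X) {c a : C} (u v : c ⟶ T.obj a) : Prop :=
  interp R T σ s u = interp R T σ s v

/-- A `T`-equation: a parallel pair of Kleisli maps. -/
structure TEq (T : C ⥤ C) where
  coar : C
  ar : C
  lhs : coar ⟶ T.obj ar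
  rhs : coar ⟶ T.obj ar

variable (A) in
/-- A Monadic Equational System: a biclosed `V`-action together with a strong
monad and a set of equations. -/
structure MES where
  R : RightClosed A
  L : LeftClosed A
  T : StrongMonad A
  E : Set (TEq T.F)

/-- Eilenberg–Moore algebra laws for a strong monad. -/
def IsEMAlgebra (M : StrongMonad A) {X : C} (s : M.F.obj X ⟶ X) : Prop :=
  M.unit.app X ≫ s = 𝟙 X ∧ M.mul.app X ≫ s = M.F.map s ≫ s

/-- An `S`-algebra: an Eilenberg–Moore algebra satisfying all the equations. -/
def IsSAlgebra (S : MES A) {X : C} (s : S.T.F.obj X ⟶ X) : Prop :=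
  IsEMAlgebra S.T s ∧ ∀ e ∈ S.E, Satisfies S.R S.T.F S.T.str s e.lhs e.rhs

/-- Free `S`-algebras: a left adjoint (described by its universal property)
to the forgetful functor from `S`-algebras. -/
structure FreeAlgebras (S : MES A) where
  TS : C → C
  τ : ∀ X : C, S.T.F.obj (TS X) ⟶ TS X
  unit : ∀ X : C, X ⟶ TS X
  isAlg : ∀ X : C, IsSAlgebra S (τ X)
  extend : ∀ (X : C) {Y : C} (t : S.T.F.obj Y ⟶ Y), IsSAlgebra S t →
    ∀ f : X ⟶ Y, ∃! g : TS X ⟶ Y, S.T.F.map g ≫ t = τ X ≫ g ∧ unit X ≫ g = f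

/-- The lifted algebra `s_v : T ⟦v,X⟧ ⟶ ⟦v,X⟧` on a left-hom. -/
def liftAlg (L : LeftClosed A) (T : C ⥤ C)
    (σ : ∀ v : V, T ⋙ A.act.obj v ⟶ A.act.obj v ⋙ T)
    {X : C} (s : T.obj X ⟶ X) (v : V) :
    T.obj ((L.lhom v).obj X) ⟶ (L.lhom v).obj X :=
  ((L.adj v).homEquiv _ X)
    ((σ v).app ((L.lhom v).obj X) ≫ T.map (L.ev v X) ≫ s)

/-- The object part `K_X(a) = ⟦C̲(a,X),X⟧` of the double-dualization construction. -/
def Kobj (R : RightClosed A) (L : LeftClosed A) (X a : C) : C :=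
  (L.lhom ((R.rhom a).obj X)).obj X

/-- The morphism part of the double-dualization construction. -/
def Kmap (R : RightClosed A) (L : LeftClosed A) (X : C) {a b : C} (f : a ⟶ b) :
    Kobj R L X a ⟶ Kobj R L X b :=
  L.lmap (R.rmap f X) X

/-- The unit `a ⟶ K_X a` of the double-dualization monad: the transpose of the
evaluation `ev_{a,X}`. -/
def ddUnit (R : RightClosed A) (L : LeftClosed A) (X a : C) : a ⟶ Kobj R L X a :=
  ((L.adj ((R.rhom a).obj X)).homEquiv a X) (R.ev a X)

/-- The map `δ_v : v ⟶ C̲(⟦v,X⟧,X)`: the transpose of the evaluation `ev_{v,X}`. -/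
def dd (R : RightClosed A) (L : LeftClosed A) (X : C) (v : V) :
    v ⟶ (R.rhom ((L.lhom v).obj X)).obj X :=
  ((R.adj ((L.lhom v).obj X)).homEquiv v X) (L.ev v X)

/-- The multiplication `K_X (K_X a) ⟶ K_X a` of the double-dualization monad,
namely `⟦δ_{C̲(a,X)},X⟧`. -/
def ddMult (R : RightClosed A) (L : LeftClosed A) (X a : C) :
    Kobj R L X (Kobj R L X a) ⟶ Kobj R L X a :=
  L.lmap (dd R L X ((R.rhom a).obj X)) X

/-- The map `C̲(v ⊳ a, X) ⊗ v ⟶ C̲(a,X)`, transpose of `ev ∘ assoc`. -/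
def hatg (R : RightClosed A) (X : C) (v : V) (a : C) :
    ((R.rhom ((A.act.obj v).obj a)).obj X) ⊗ v ⟶ (R.rhom a).obj X :=
  ((R.adj a).homEquiv _ X)
    ((A.assoc ((R.rhom ((A.act.obj v).obj a)).obj X) v).hom.app a ≫
      R.ev ((A.act.obj v).obj a) X)

/-- The clone strength `v ⊳ ⟦C̲(a,X),Y⟧ ⟶ ⟦C̲(v ⊳ a,X),Y⟧`. -/
def cloneStr (R : RightClosed A) (L : LeftClosed A) (X Y : C) (v : V) (a : C) :
    (A.act.obj v).obj ((L.lhom ((R.rhom a).obj X)).obj Y) ⟶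
      (L.lhom ((R.rhom ((A.act.obj v).obj a)).obj X)).obj Y :=
  ((L.adj ((R.rhom ((A.act.obj v).obj a)).obj X)).homEquiv _ Y)
    ((A.assoc ((R.rhom ((A.act.obj v).obj a)).obj X) v).inv.app
        ((L.lhom ((R.rhom a).obj X)).obj Y) ≫
      (A.act.map (hatg R X v a)).app ((L.lhom ((R.rhom a).obj X)).obj Y) ≫
      L.ev ((R.rhom a).obj X) Y)

/-- The counit `ε_X : K_X X ⟶ X` of the clone adjunction at `X`. -/
def cleval (R : RightClosed A) (L : LeftClosed A) (X : C) : Kobj R L X X ⟶ X :=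
  L.lmap (((R.adj X).homEquiv (𝟙_ V) X) (A.lam.hom.app X)) X ≫
    A.lam.inv.app ((L.lhom (𝟙_ V)).obj X) ≫ L.ev (𝟙_ V) X

/-- The transpose `m(s)_a : T a ⟶ K_X a` of the interpretation map `ι(s)_a`. -/
def mOf (R : RightClosed A) (L : LeftClosed A) (T : C ⥤ C)
    (σ : ∀ v : V, T ⋙ A.act.obj v ⟶ A.act.obj v ⋙ T)
    {X : C} (s : T.obj X ⟶ X) (a : C) :
    T.obj a ⟶ Kobj R L X a :=
  ((L.adj ((R.rhom a).obj X)).homEquiv (T.obj a) X) (interpMap R T σ s a)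

/-- The identity strength on the identity functor. -/
def idStr (A : MonAction V C) (v : V) : 𝟭 C ⋙ A.act.obj v ⟶ A.act.obj v ⋙ 𝟭 C :=
  { app := fun c => 𝟙 ((A.act.obj v).obj c) }

/-- The unit of the clone monad: the clone transpose of the identity on `X`
(computed through the identity strong functor). -/
def cloneUnit (R : RightClosed A) (L : LeftClosed A) (X a : C) : a ⟶ Kobj R L X a :=
  mOf R L (𝟭 C) (idStr A) (𝟙 X) a

/-- The multiplication of the clone monad: the clone transpose of
`ε_X ∘ K_X ε_X : K_X K_X X ⟶ X` computed through the composite `K_X ∘ K_X`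
with its composite (clone) strength. -/
def cloneMult (R : RightClosed A) (L : LeftClosed A) (X a : C) :
    Kobj R L X (Kobj R L X a) ⟶ Kobj R L X a :=
  ((L.adj ((R.rhom a).obj X)).homEquiv _ X)
    (cloneStr R L X X ((R.rhom a).obj X) (Kobj R L X a) ≫
      Kmap R L X (cloneStr R L X X ((R.rhom a).obj X) a) ≫
      Kmap R L X (Kmap R L X (R.ev a X)) ≫
      Kmap R L X (cleval R L X) ≫ cleval R L X)

end MonEq

namespace MonEq

variable {V : Type u₁} [Category.{v₁} V] [MonoidalCategory V]
variable {C : Type u₂} [Category.{v₂} C] {D : Type u₃} [Category.{v₃} D]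

/-- A strong functor between a `V`-action `A` on `C` and a `V`-action `B` on `D`. -/
structure StrongFunctorB (A : MonAction V C) (B : MonAction V D) where
  F : C ⥤ D
  str : ∀ v : V, F ⋙ B.act.obj v ⟶ A.act.obj v ⋙ F
  str_natural :
    ∀ {v w : V} (h : v ⟶ w) (c : C),
      (B.act.map h).app (F.obj c) ≫ (str w).app c =
        (str v).app c ≫ F.map ((A.act.map h).app c)
  str_lam :
    ∀ c : C,
      (str (𝟙_ V)).app c ≫ F.map (A.lam.hom.app c) = B.lam.hom.app (F.obj c)
  str_assoc :
    ∀ (u v : V) (c : C),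
      (str (u ⊗ v)).app c ≫ F.map ((A.assoc u v).hom.app c) =
        (B.assoc u v).hom.app (F.obj c) ≫ (B.act.obj u).map ((str v).app c) ≫
          (str u).app ((A.act.obj v).obj c)

variable {A : MonAction V C} {B : MonAction V D}

/-- Strong natural transformations between strong functors. -/
def IsStrongHomB (F G : StrongFunctorB A B) (τ : F.F ⟶ G.F) : Prop :=
  ∀ (v : V) (c : C),
    (B.act.obj v).map (τ.app c) ≫ (G.str v).app c =
      (F.str v).app c ≫ τ.app ((A.act.obj v).obj c)

/-- The category `St(A,B)` of strong functors and strong natural transformations. -/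
instance : Category (StrongFunctorB A B) where
  Hom F G := {τ : F.F ⟶ G.F // IsStrongHomB F G τ}
  id F := ⟨𝟙 F.F, by intro v c; simp⟩
  comp {F G H} f g := ⟨f.1 ≫ g.1, by
    intro v c
    simp only [NatTrans.comp_app, Functor.map_comp, Category.assoc, g.2 v c]
    rw [← Category.assoc, f.2 v c, Category.assoc]⟩
  id_comp f := Subtype.ext (by simp)
  comp_id f := Subtype.ext (by simp)
  assoc f g h := Subtype.ext (by simp)

/-- The evaluation-at-`X` functor `E_X : St(A,B) ⥤ D`. -/
def evalAt (A : MonAction V C) (B : MonAction V D) (X : C) :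
    StrongFunctorB A B ⥤ D where
  obj F := F.F.obj X
  map τ := τ.1.app X
  map_id := by intros; rfl
  map_comp := by intros; rfl

/-- The object part of the clone functor: `⟨X,Y⟩(a) = ⟦A̲(a,X),Y⟧`. -/
def cloneObjB (R : RightClosed A) (L : LeftClosed B) (X : C) (Y : D) (a : C) : D :=
  (L.lhom ((R.rhom a).obj X)).obj Y

/-- The clone strength `v ⊳ ⟦A̲(a,X),Y⟧ ⟶ ⟦A̲(v ⊳ a,X),Y⟧`: the transpose of
the composite of `assoc⁻¹`, the action of `hatg : A̲(v ⊳ a,X) ⊗ v ⟶ A̲(a,X)`,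
and the evaluation `A̲(a,X) ⊳ ⟦A̲(a,X),Y⟧ ⟶ Y`. -/
def cloneStrB (R : RightClosed A) (L : LeftClosed B) (X : C) (Y : D) (v : V) (a : C) :
    (B.act.obj v).obj (cloneObjB R L X Y a) ⟶ cloneObjB R L X Y ((A.act.obj v).obj a) :=
  ((L.adj ((R.rhom ((A.act.obj v).obj a)).obj X)).homEquiv _ Y)
    ((B.assoc ((R.rhom ((A.act.obj v).obj a)).obj X) v).inv.app (cloneObjB R L X Y a) ≫
      (B.act.map (hatg R X v a)).app (cloneObjB R L X Y a) ≫
      L.ev ((R.rhom a).obj X) Y)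


section CloneAux

variable (R : RightClosed A) (L : LeftClosed B) (X : C)

/-- `cloneStrB` with its type unfolded. -/
def cloneStrU (Y : D) (v : V) (a : C) :
    (B.act.obj v).obj ((L.lhom ((R.rhom a).obj X)).obj Y) ⟶
      (L.lhom ((R.rhom ((A.act.obj v).obj a)).obj X)).obj Y :=
  cloneStrB R L X Y v a

lemma L_unc (v : V) {c Y : D} (t : (B.act.obj v).obj c ⟶ Y) :
    (B.act.obj v).map (((L.adj v).homEquiv c Y) t) ≫ L.ev v Y = t := by
  conv_rhs => rw [← Equiv.symm_apply_apply ((L.adj v).homEquiv c Y) t]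
  rw [Adjunction.homEquiv_counit]
  rfl

lemma L_ext (v : V) {c Y : D} {g h : c ⟶ (L.lhom v).obj Y}
    (H : (B.act.obj v).map g ≫ L.ev v Y = (B.act.obj v).map h ≫ L.ev v Y) : g = h := by
  apply ((L.adj v).homEquiv c Y).symm.injective
  rw [Adjunction.homEquiv_counit, Adjunction.homEquiv_counit]
  exact H

lemma R_unc (a : C) {v : V} (t : (A.act.obj v).obj a ⟶ X) :
    (A.act.map (((R.adj a).homEquiv v X) t)).app a ≫ R.ev a X = t := by
  conv_rhs => rw [← Equiv.symm_apply_apply ((R.adj a).homEquiv v X) t]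
  rw [Adjunction.homEquiv_counit]
  rfl

lemma R_ext (a : C) {v : V} {g h : v ⟶ (R.rhom a).obj X}
    (H : (A.act.map g).app a ≫ R.ev a X = (A.act.map h).app a ≫ R.ev a X) : g = h := by
  apply ((R.adj a).homEquiv v X).symm.injective
  rw [Adjunction.homEquiv_counit, Adjunction.homEquiv_counit]
  exact H

lemma unc_lmap {v w : V} (h : v ⟶ w) (Y : D) :
    (B.act.obj v).map (L.lmap h Y) ≫ L.ev v Y =
      (B.act.map h).app ((L.lhom w).obj Y) ≫ L.ev w Y := L_unc L v _

lemma unc_rmap {a b : C} (f : a ⟶ b) :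
    (A.act.map (R.rmap f X)).app a ≫ R.ev a X =
      (A.act.obj ((R.rhom b).obj X)).map f ≫ R.ev b X := R_unc R X a _

lemma runc_hatg (v : V) (a : C) :
    (A.act.map (hatg R X v a)).app a ≫ R.ev a X =
      (A.assoc ((R.rhom ((A.act.obj v).obj a)).obj X) v).hom.app a ≫
        R.ev ((A.act.obj v).obj a) X := R_unc R X a _

lemma unc_comp_lmap {v w : V} (h : v ⟶ w) {c : D} (Y : D) (g : c ⟶ (L.lhom w).obj Y) :
    (B.act.obj v).map (g ≫ L.lmap h Y) ≫ L.ev v Y =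
      (B.act.map h).app c ≫ (B.act.obj w).map g ≫ L.ev w Y := by
  rw [Functor.map_comp, Category.assoc, unc_lmap, ← Category.assoc,
    (B.act.map h).naturality g, Category.assoc]

lemma runc_comp_rmap {a b : C} (f : a ⟶ b) {v : V} (h : v ⟶ (R.rhom b).obj X) :
    (A.act.map (h ≫ R.rmap f X)).app a ≫ R.ev a X =
      (A.act.obj v).map f ≫ (A.act.map h).app b ≫ R.ev b X := by
  rw [A.act.map_comp, NatTrans.comp_app, Category.assoc, unc_rmap, ← Category.assoc,
    ← (A.act.map h).naturality f, Category.assoc]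

lemma lmap_id (v : V) (Y : D) : L.lmap (𝟙 v) Y = 𝟙 ((L.lhom v).obj Y) := by
  apply L_ext L v
  rw [unc_lmap]
  simp

lemma lmap_comp {u v w : V} (h : u ⟶ v) (k : v ⟶ w) (Y : D) :
    L.lmap (h ≫ k) Y = L.lmap k Y ≫ L.lmap h Y := by
  apply L_ext L u
  rw [unc_lmap, unc_comp_lmap, unc_lmap, B.act.map_comp, NatTrans.comp_app, Category.assoc]

lemma rmap_id (a : C) : R.rmap (𝟙 a) X = 𝟙 ((R.rhom a).obj X) := by
  apply R_ext R X a
  rw [unc_rmap]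
  simp

lemma rmap_comp {a b c : C} (f : a ⟶ b) (g : b ⟶ c) :
    R.rmap (f ≫ g) X = R.rmap g X ≫ R.rmap f X := by
  apply R_ext R X a
  rw [unc_rmap, runc_comp_rmap, unc_rmap, Functor.map_comp, Category.assoc]

lemma ev_natural (v : V) {Y Y' : D} (g : Y ⟶ Y') :
    (B.act.obj v).map ((L.lhom v).map g) ≫ L.ev v Y' = L.ev v Y ≫ g :=
  (L.adj v).counit.naturality g

lemma lmap_natural {v w : V} (h : v ⟶ w) {Y Y' : D} (g : Y ⟶ Y') :
    (L.lhom w).map g ≫ L.lmap h Y' = L.lmap h Y ≫ (L.lhom v).map g := by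
  apply L_ext L v
  rw [unc_comp_lmap, ev_natural, Functor.map_comp, Category.assoc, ev_natural,
    ← Category.assoc, ← Category.assoc, unc_lmap]

lemma assoc_inv_natural {E : Type*} [Category E] (M : MonAction V E)
    {u u' v v' : V} (f : u ⟶ u') (g : v ⟶ v') (c : E) :
    (M.assoc u v).inv.app c ≫ (M.act.map (f ⊗ₘ g)).app c =
      (M.act.map f).app ((M.act.obj v).obj c) ≫
        (M.act.obj u').map ((M.act.map g).app c) ≫ (M.assoc u' v').inv.app c := by
  calc (M.assoc u v).inv.app c ≫ (M.act.map (f ⊗ₘ g)).app c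
      = (M.assoc u v).inv.app c ≫
          ((M.act.map (f ⊗ₘ g)).app c ≫ (M.assoc u' v').hom.app c) ≫
          (M.assoc u' v').inv.app c := by simp
    _ = (M.assoc u v).inv.app c ≫
          ((M.assoc u v).hom.app c ≫ (M.act.map f).app ((M.act.obj v).obj c) ≫
            (M.act.obj u').map ((M.act.map g).app c)) ≫ (M.assoc u' v').inv.app c := by
          rw [M.assoc_natural]
    _ = _ := by simp

lemma assoc_natural_assoc {E : Type*} [Category E] (M : MonAction V E)
    {u u' v v' : V} (f : u ⟶ u') (g : v ⟶ v') (c : E) {Z : E}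
    (t : (M.act.obj u').obj ((M.act.obj v').obj c) ⟶ Z) :
    (M.act.map (f ⊗ₘ g)).app c ≫ (M.assoc u' v').hom.app c ≫ t =
      (M.assoc u v).hom.app c ≫ (M.act.map f).app ((M.act.obj v).obj c) ≫
        (M.act.obj u').map ((M.act.map g).app c) ≫ t := by
  rw [← Category.assoc, M.assoc_natural]
  simp only [Category.assoc]

lemma hatg_comp_rmap {a b : C} (f : a ⟶ b) (v : V) :
    hatg R X v b ≫ R.rmap f X =
      (R.rmap ((A.act.obj v).map f) X ⊗ₘ 𝟙 v) ≫ hatg R X v a := by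
  apply R_ext R X a
  rw [runc_comp_rmap, runc_hatg, A.act.map_comp, NatTrans.comp_app, Category.assoc,
    runc_hatg, assoc_natural_assoc]
  simp only [CategoryTheory.Functor.map_id, NatTrans.id_app, Category.id_comp]
  rw [unc_rmap, ← Category.assoc, (A.assoc _ v).hom.naturality f, Category.assoc]
  rfl

lemma hatg_natural_v {v w : V} (h : v ⟶ w) (a : C) :
    (𝟙 ((R.rhom ((A.act.obj w).obj a)).obj X) ⊗ₘ h) ≫ hatg R X w a =
      (R.rmap ((A.act.map h).app a) X ⊗ₘ 𝟙 v) ≫ hatg R X v a := by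
  apply R_ext R X a
  simp only [A.act.map_comp, NatTrans.comp_app, Category.assoc]
  rw [runc_hatg, runc_hatg, assoc_natural_assoc, assoc_natural_assoc]
  simp only [CategoryTheory.Functor.map_id, NatTrans.id_app, Category.id_comp]
  rw [unc_rmap]
  simp

lemma hatg_unit (a : C) :
    (R.rmap (A.lam.hom.app a) X ⊗ₘ 𝟙 (𝟙_ V)) ≫ hatg R X (𝟙_ V) a =
      (ρ_ ((R.rhom a).obj X)).hom := by
  apply R_ext R X a
  simp only [A.act.map_comp, NatTrans.comp_app, Category.assoc]
  rw [runc_hatg, assoc_natural_assoc]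
  simp only [CategoryTheory.Functor.map_id, NatTrans.id_app, Category.id_comp]
  rw [unc_rmap, ← Category.assoc, A.triangle_right]
  rfl

lemma hatg_assoc (u v : V) (a : C) :
    (α_ ((R.rhom ((A.act.obj u).obj ((A.act.obj v).obj a))).obj X) u v).hom ≫
      (R.rmap ((A.assoc u v).hom.app a) X ⊗ₘ 𝟙 (u ⊗ v)) ≫ hatg R X (u ⊗ v) a =
    (hatg R X u ((A.act.obj v).obj a) ⊗ₘ 𝟙 v) ≫ hatg R X v a := by
  apply R_ext R X a
  simp only [A.act.map_comp, NatTrans.comp_app, Category.assoc]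
  rw [runc_hatg (v := u ⊗ v), runc_hatg (v := v), assoc_natural_assoc,
    assoc_natural_assoc]
  simp only [CategoryTheory.Functor.map_id, NatTrans.id_app, Category.id_comp]
  rw [unc_rmap, runc_hatg]
  simp only [Functor.comp_obj]
  rw [reassoc_of% (A.pentagon _ u v a)]

lemma hatg_counit (a : C) :
    ((((R.adj X).homEquiv (𝟙_ V) X) (A.lam.hom.app X) ≫ R.rmap (R.ev a X) X) ⊗ₘ
        𝟙 ((R.rhom a).obj X)) ≫ hatg R X ((R.rhom a).obj X) a =
      (λ_ ((R.rhom a).obj X)).hom := by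
  apply R_ext R X a
  simp only [A.act.map_comp, NatTrans.comp_app, Category.assoc]
  rw [runc_hatg, assoc_natural_assoc]
  simp only [CategoryTheory.Functor.map_id, NatTrans.id_app, Category.id_comp]
  rw [runc_comp_rmap, R_unc R X X, A.lam.hom.naturality (R.ev a X)]
  rw [reassoc_of% (A.triangle_left ((R.rhom a).obj X) a)]
  rfl

lemma unc_cloneStr (Y : D) (v : V) (a : C) :
    (B.act.obj ((R.rhom ((A.act.obj v).obj a)).obj X)).map (cloneStrU R L X Y v a) ≫
      L.ev ((R.rhom ((A.act.obj v).obj a)).obj X) Y =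
    (B.assoc ((R.rhom ((A.act.obj v).obj a)).obj X) v).inv.app ((L.lhom ((R.rhom a).obj X)).obj Y) ≫
      (B.act.map (hatg R X v a)).app ((L.lhom ((R.rhom a).obj X)).obj Y) ≫
      L.ev ((R.rhom a).obj X) Y := L_unc L _ _

lemma cloneStr_naturality (Y : D) (v : V) {a b : C} (f : a ⟶ b) :
    (B.act.obj v).map (L.lmap (R.rmap f X) Y) ≫ cloneStrU R L X Y v b =
      cloneStrU R L X Y v a ≫ L.lmap (R.rmap ((A.act.obj v).map f) X) Y := by
  apply L_ext L ((R.rhom ((A.act.obj v).obj b)).obj X)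
  rw [Functor.map_comp, Category.assoc, unc_cloneStr, unc_comp_lmap, unc_cloneStr]
  have nat1 : (B.act.obj ((R.rhom ((A.act.obj v).obj b)).obj X)).map
        ((B.act.obj v).map (L.lmap (R.rmap f X) Y)) ≫
        (B.assoc ((R.rhom ((A.act.obj v).obj b)).obj X) v).inv.app
          ((L.lhom ((R.rhom b).obj X)).obj Y) =
      (B.assoc ((R.rhom ((A.act.obj v).obj b)).obj X) v).inv.app
          ((L.lhom ((R.rhom a).obj X)).obj Y) ≫
        (B.act.obj ((R.rhom ((A.act.obj v).obj b)).obj X ⊗ v)).map (L.lmap (R.rmap f X) Y) :=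
    (B.assoc _ v).inv.naturality _
  rw [reassoc_of% nat1]
  have nat2 := (B.act.map (hatg R X v b)).naturality (L.lmap (R.rmap f X) Y)
  rw [reassoc_of% nat2, unc_lmap]
  have key2 : (B.act.map (hatg R X v b)).app ((L.lhom ((R.rhom a).obj X)).obj Y) ≫
        (B.act.map (R.rmap f X)).app ((L.lhom ((R.rhom a).obj X)).obj Y) =
      (B.act.map (R.rmap ((A.act.obj v).map f) X ⊗ₘ 𝟙 v)).app
          ((L.lhom ((R.rhom a).obj X)).obj Y) ≫
        (B.act.map (hatg R X v a)).app ((L.lhom ((R.rhom a).obj X)).obj Y) := by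
    rw [← NatTrans.comp_app, ← NatTrans.comp_app, ← B.act.map_comp, ← B.act.map_comp,
      hatg_comp_rmap]
  rw [reassoc_of% key2]
  have key3 := assoc_inv_natural B (R.rmap ((A.act.obj v).map f) X) (𝟙 v)
    ((L.lhom ((R.rhom a).obj X)).obj Y)
  rw [reassoc_of% key3]
  simp

lemma pentagon_inv_aux {E : Type*} [Category E] (M : MonAction V E) (q u v : V) (c : E) :
    (M.act.obj q).map ((M.assoc u v).hom.app c) ≫
        (M.assoc q u).inv.app ((M.act.obj v).obj c) ≫ (M.assoc (q ⊗ u) v).inv.app c =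
      (M.assoc q (u ⊗ v)).inv.app c ≫ (M.act.map (α_ q u v).inv).app c := by
  have hα : (M.act.map (α_ q u v).inv).app c ≫ (M.act.map (α_ q u v).hom).app c = 𝟙 _ := by
    rw [← NatTrans.comp_app, ← M.act.map_comp, Iso.inv_hom_id, M.act.map_id]
    rfl
  have e1 : (M.assoc q (u ⊗ v)).hom.app c ≫ (M.act.obj q).map ((M.assoc u v).hom.app c) =
      (M.act.map (α_ q u v).inv).app c ≫ (M.assoc (q ⊗ u) v).hom.app c ≫
        (M.assoc q u).hom.app ((M.act.obj v).obj c) := by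
    rw [← M.pentagon, ← Category.assoc, ← Category.assoc, hα, Category.id_comp]
  calc (M.act.obj q).map ((M.assoc u v).hom.app c) ≫
        (M.assoc q u).inv.app ((M.act.obj v).obj c) ≫ (M.assoc (q ⊗ u) v).inv.app c
      = (M.assoc q (u ⊗ v)).inv.app c ≫
          ((M.assoc q (u ⊗ v)).hom.app c ≫ (M.act.obj q).map ((M.assoc u v).hom.app c)) ≫
          (M.assoc q u).inv.app ((M.act.obj v).obj c) ≫ (M.assoc (q ⊗ u) v).inv.app c := by
        simp
    _ = _ := by rw [e1]; simp

lemma cloneStr_str_natural (Y : D) {v w : V} (h : v ⟶ w) (a : C) :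
    (B.act.map h).app ((L.lhom ((R.rhom a).obj X)).obj Y) ≫ cloneStrU R L X Y w a =
      cloneStrU R L X Y v a ≫ L.lmap (R.rmap ((A.act.map h).app a) X) Y := by
  apply L_ext L ((R.rhom ((A.act.obj w).obj a)).obj X)
  rw [Functor.map_comp, Category.assoc, unc_cloneStr, unc_comp_lmap, unc_cloneStr]
  have key1 := assoc_inv_natural B (𝟙 ((R.rhom ((A.act.obj w).obj a)).obj X)) h
    ((L.lhom ((R.rhom a).obj X)).obj Y)
  simp only [CategoryTheory.Functor.map_id, NatTrans.id_app, Category.id_comp] at key1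
  rw [← reassoc_of% key1]
  have key2 : (B.act.map (𝟙 ((R.rhom ((A.act.obj w).obj a)).obj X) ⊗ₘ h)).app
        ((L.lhom ((R.rhom a).obj X)).obj Y) ≫
        (B.act.map (hatg R X w a)).app ((L.lhom ((R.rhom a).obj X)).obj Y) =
      (B.act.map (R.rmap ((A.act.map h).app a) X ⊗ₘ 𝟙 v)).app
          ((L.lhom ((R.rhom a).obj X)).obj Y) ≫
        (B.act.map (hatg R X v a)).app ((L.lhom ((R.rhom a).obj X)).obj Y) := by
    rw [← NatTrans.comp_app, ← NatTrans.comp_app, ← B.act.map_comp, ← B.act.map_comp,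
      hatg_natural_v]
  rw [reassoc_of% key2]
  have key3 := assoc_inv_natural B (R.rmap ((A.act.map h).app a) X) (𝟙 v)
    ((L.lhom ((R.rhom a).obj X)).obj Y)
  rw [reassoc_of% key3]
  simp

lemma cloneStr_lam (Y : D) (a : C) :
    cloneStrU R L X Y (𝟙_ V) a ≫ L.lmap (R.rmap (A.lam.hom.app a) X) Y =
      B.lam.hom.app ((L.lhom ((R.rhom a).obj X)).obj Y) := by
  apply L_ext L ((R.rhom a).obj X)
  rw [unc_comp_lmap, unc_cloneStr]
  have key1 := assoc_inv_natural B (R.rmap (A.lam.hom.app a) X) (𝟙 (𝟙_ V))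
    ((L.lhom ((R.rhom a).obj X)).obj Y)
  simp only [CategoryTheory.Functor.map_id, NatTrans.id_app, Category.id_comp] at key1
  rw [← reassoc_of% key1]
  have key2 : (B.act.map (R.rmap (A.lam.hom.app a) X ⊗ₘ 𝟙 (𝟙_ V))).app
        ((L.lhom ((R.rhom a).obj X)).obj Y) ≫
        (B.act.map (hatg R X (𝟙_ V) a)).app ((L.lhom ((R.rhom a).obj X)).obj Y) =
      (B.act.map (ρ_ ((R.rhom a).obj X)).hom).app ((L.lhom ((R.rhom a).obj X)).obj Y) := by
    rw [← NatTrans.comp_app, ← B.act.map_comp, hatg_unit]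
  rw [reassoc_of% key2, ← B.triangle_right]
  simp

lemma cloneStr_assoc (Y : D) (u v : V) (a : C) :
    cloneStrU R L X Y (u ⊗ v) a ≫ L.lmap (R.rmap ((A.assoc u v).hom.app a) X) Y =
      (B.assoc u v).hom.app ((L.lhom ((R.rhom a).obj X)).obj Y) ≫
        (B.act.obj u).map (cloneStrU R L X Y v a) ≫
        cloneStrU R L X Y u ((A.act.obj v).obj a) := by
  apply L_ext L ((R.rhom ((A.act.obj u).obj ((A.act.obj v).obj a))).obj X)
  rw [unc_comp_lmap, unc_cloneStr, Functor.map_comp, Functor.map_comp, Category.assoc,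
    Category.assoc, unc_cloneStr]
  have key1 := assoc_inv_natural B (R.rmap ((A.assoc u v).hom.app a) X) (𝟙 (u ⊗ v))
    ((L.lhom ((R.rhom a).obj X)).obj Y)
  simp only [CategoryTheory.Functor.map_id, NatTrans.id_app, Category.id_comp] at key1
  rw [← reassoc_of% key1]
  have nat1 : (B.act.obj ((R.rhom ((A.act.obj u).obj ((A.act.obj v).obj a))).obj X)).map
        ((B.act.obj u).map (cloneStrU R L X Y v a)) ≫
        (B.assoc ((R.rhom ((A.act.obj u).obj ((A.act.obj v).obj a))).obj X) u).inv.app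
          ((L.lhom ((R.rhom ((A.act.obj v).obj a)).obj X)).obj Y) =
      (B.assoc ((R.rhom ((A.act.obj u).obj ((A.act.obj v).obj a))).obj X) u).inv.app
          ((B.act.obj v).obj ((L.lhom ((R.rhom a).obj X)).obj Y)) ≫
        (B.act.obj ((R.rhom ((A.act.obj u).obj ((A.act.obj v).obj a))).obj X ⊗ u)).map
          (cloneStrU R L X Y v a) :=
    (B.assoc _ u).inv.naturality _
  rw [reassoc_of% nat1]
  have nat2 := (B.act.map (hatg R X u ((A.act.obj v).obj a))).naturality
    (cloneStrU R L X Y v a)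
  rw [reassoc_of% nat2, unc_cloneStr]
  have key3 := assoc_inv_natural B (hatg R X u ((A.act.obj v).obj a)) (𝟙 v)
    ((L.lhom ((R.rhom a).obj X)).obj Y)
  simp only [CategoryTheory.Functor.map_id, NatTrans.id_app, Category.id_comp] at key3
  rw [← reassoc_of% key3]
  rw [reassoc_of% (pentagon_inv_aux B
    ((R.rhom ((A.act.obj u).obj ((A.act.obj v).obj a))).obj X) u v
    ((L.lhom ((R.rhom a).obj X)).obj Y))]
  have key4 : (B.act.map (α_ ((R.rhom ((A.act.obj u).obj ((A.act.obj v).obj a))).obj X)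
          u v).inv).app ((L.lhom ((R.rhom a).obj X)).obj Y) ≫
        (B.act.map (hatg R X u ((A.act.obj v).obj a) ⊗ₘ 𝟙 v)).app
          ((L.lhom ((R.rhom a).obj X)).obj Y) ≫
        (B.act.map (hatg R X v a)).app ((L.lhom ((R.rhom a).obj X)).obj Y) =
      (B.act.map (R.rmap ((A.assoc u v).hom.app a) X ⊗ₘ 𝟙 (u ⊗ v))).app
          ((L.lhom ((R.rhom a).obj X)).obj Y) ≫
        (B.act.map (hatg R X (u ⊗ v) a)).app ((L.lhom ((R.rhom a).obj X)).obj Y) := by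
    simp only [← NatTrans.comp_app, ← B.act.map_comp]
    rw [← hatg_assoc]
    simp
  rw [reassoc_of% key4]

/-- The clone strong functor `⟨X,Y⟩`. -/
def cloneF (Y : D) : StrongFunctorB A B where
  F := { obj := fun a => (L.lhom ((R.rhom a).obj X)).obj Y
         map := fun {a b} f => L.lmap (R.rmap f X) Y
         map_id := fun a => by
           show L.lmap (R.rmap (𝟙 a) X) Y = 𝟙 ((L.lhom ((R.rhom a).obj X)).obj Y)
           rw [rmap_id, lmap_id]
         map_comp := fun {a b c} f g => by
           show L.lmap (R.rmap (f ≫ g) X) Y =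
             L.lmap (R.rmap f X) Y ≫ L.lmap (R.rmap g X) Y
           rw [rmap_comp, lmap_comp] }
  str := fun v =>
    { app := fun a => cloneStrU R L X Y v a
      naturality := fun a b f => cloneStr_naturality R L X Y v f }
  str_natural := fun {v w} h a => cloneStr_str_natural R L X Y h a
  str_lam := fun a => cloneStr_lam R L X Y a
  str_assoc := fun u v a => cloneStr_assoc R L X Y u v a

lemma cloneStr_hom_natural {Y Y' : D} (g : Y ⟶ Y') (v : V) (a : C) :
    (B.act.obj v).map ((L.lhom ((R.rhom a).obj X)).map g) ≫ cloneStrU R L X Y' v a =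
      cloneStrU R L X Y v a ≫ (L.lhom ((R.rhom ((A.act.obj v).obj a)).obj X)).map g := by
  apply L_ext L ((R.rhom ((A.act.obj v).obj a)).obj X)
  rw [Functor.map_comp, Category.assoc, unc_cloneStr, Functor.map_comp, Category.assoc,
    ev_natural]
  have nat1 : (B.act.obj ((R.rhom ((A.act.obj v).obj a)).obj X)).map
        ((B.act.obj v).map ((L.lhom ((R.rhom a).obj X)).map g)) ≫
        (B.assoc ((R.rhom ((A.act.obj v).obj a)).obj X) v).inv.app
          ((L.lhom ((R.rhom a).obj X)).obj Y') =
      (B.assoc ((R.rhom ((A.act.obj v).obj a)).obj X) v).inv.app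
          ((L.lhom ((R.rhom a).obj X)).obj Y) ≫
        (B.act.obj ((R.rhom ((A.act.obj v).obj a)).obj X ⊗ v)).map
          ((L.lhom ((R.rhom a).obj X)).map g) :=
    (B.assoc _ v).inv.naturality _
  rw [reassoc_of% nat1]
  have nat2 := (B.act.map (hatg R X v a)).naturality ((L.lhom ((R.rhom a).obj X)).map g)
  rw [reassoc_of% nat2, ev_natural, reassoc_of% (unc_cloneStr R L X Y v a)]

/-- The clone functor `⟨X,−⟩ : D ⥤ St(A,B)`. -/
def cloneG : D ⥤ StrongFunctorB A B where
  obj Y := cloneF R L X Y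
  map {Y Y'} g :=
    ⟨{ app := fun a => (L.lhom ((R.rhom a).obj X)).map g
       naturality := fun a b f => (lmap_natural L (R.rmap f X) g).symm },
      fun v a => cloneStr_hom_natural R L X g v a⟩
  map_id Y := Subtype.ext (by
    apply NatTrans.ext
    funext a
    show (L.lhom ((R.rhom a).obj X)).map (𝟙 Y) = 𝟙 ((L.lhom ((R.rhom a).obj X)).obj Y)
    simp)
  map_comp f g := Subtype.ext (by
    apply NatTrans.ext
    funext a
    show (L.lhom ((R.rhom a).obj X)).map (_ ≫ _) = _ ≫ _
    simp
    rfl)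

/-- The counit of the clone adjunction. -/
def cloneCounit (Y : D) : (L.lhom ((R.rhom X).obj X)).obj Y ⟶ Y :=
  L.lmap (((R.adj X).homEquiv (𝟙_ V) X) (A.lam.hom.app X)) Y ≫
    B.lam.inv.app ((L.lhom (𝟙_ V)).obj Y) ≫ L.ev (𝟙_ V) Y

/-- The transpose of `f : F X ⟶ Y` along the clone adjunction. -/
def transposeτ (F : StrongFunctorB A B) (Y : D) (f : F.F.obj X ⟶ Y) (a : C) :
    F.F.obj a ⟶ (L.lhom ((R.rhom a).obj X)).obj Y :=
  ((L.adj ((R.rhom a).obj X)).homEquiv (F.F.obj a) Y)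
    ((F.str ((R.rhom a).obj X)).app a ≫ F.F.map (R.ev a X) ≫ f)

lemma unc_transpose (F : StrongFunctorB A B) (Y : D) (f : F.F.obj X ⟶ Y) (a : C) :
    (B.act.obj ((R.rhom a).obj X)).map (transposeτ R L X F Y f a) ≫
      L.ev ((R.rhom a).obj X) Y =
    (F.str ((R.rhom a).obj X)).app a ≫ F.F.map (R.ev a X) ≫ f := L_unc L _ _

lemma transpose_natural (F : StrongFunctorB A B) {Y : D} (f : F.F.obj X ⟶ Y)
    {a b : C} (h : a ⟶ b) :
    F.F.map h ≫ transposeτ R L X F Y f b =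
      transposeτ R L X F Y f a ≫ L.lmap (R.rmap h X) Y := by
  apply L_ext L ((R.rhom b).obj X)
  rw [Functor.map_comp, Category.assoc, unc_transpose, unc_comp_lmap, unc_transpose]
  have nat : (B.act.obj ((R.rhom b).obj X)).map (F.F.map h) ≫
        (F.str ((R.rhom b).obj X)).app b =
      (F.str ((R.rhom b).obj X)).app a ≫
        F.F.map ((A.act.obj ((R.rhom b).obj X)).map h) :=
    (F.str ((R.rhom b).obj X)).naturality h
  rw [reassoc_of% nat, reassoc_of% (F.str_natural (R.rmap h X) a),
    ← Functor.map_comp_assoc, ← Functor.map_comp_assoc, unc_rmap]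

lemma transpose_strong (F : StrongFunctorB A B) {Y : D} (f : F.F.obj X ⟶ Y)
    (v : V) (a : C) :
    (B.act.obj v).map (transposeτ R L X F Y f a) ≫ cloneStrU R L X Y v a =
      (F.str v).app a ≫ transposeτ R L X F Y f ((A.act.obj v).obj a) := by
  apply L_ext L ((R.rhom ((A.act.obj v).obj a)).obj X)
  rw [Functor.map_comp, Category.assoc, unc_cloneStr, Functor.map_comp, Category.assoc,
    unc_transpose]
  have nat1 : (B.act.obj ((R.rhom ((A.act.obj v).obj a)).obj X)).map
        ((B.act.obj v).map (transposeτ R L X F Y f a)) ≫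
        (B.assoc ((R.rhom ((A.act.obj v).obj a)).obj X) v).inv.app
          ((L.lhom ((R.rhom a).obj X)).obj Y) =
      (B.assoc ((R.rhom ((A.act.obj v).obj a)).obj X) v).inv.app (F.F.obj a) ≫
        (B.act.obj ((R.rhom ((A.act.obj v).obj a)).obj X ⊗ v)).map
          (transposeτ R L X F Y f a) :=
    (B.assoc _ v).inv.naturality _
  rw [reassoc_of% nat1]
  have nat2 := (B.act.map (hatg R X v a)).naturality (transposeτ R L X F Y f a)
  rw [reassoc_of% nat2, unc_transpose, reassoc_of% (F.str_natural (hatg R X v a) a),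
    ← Functor.map_comp_assoc, runc_hatg, Functor.map_comp, Category.assoc,
    reassoc_of% (F.str_assoc ((R.rhom ((A.act.obj v).obj a)).obj X) v a)]
  simp only [Iso.inv_hom_id_app_assoc]

lemma transpose_counit (F : StrongFunctorB A B) {Y : D} (f : F.F.obj X ⟶ Y) :
    transposeτ R L X F Y f X ≫ cloneCounit R L X Y = f := by
  have hs : (B.act.obj (𝟙_ V)).map (transposeτ R L X F Y f X ≫
        L.lmap (((R.adj X).homEquiv (𝟙_ V) X) (A.lam.hom.app X)) Y) ≫ L.ev (𝟙_ V) Y =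
      B.lam.hom.app (F.F.obj X) ≫ f := by
    rw [unc_comp_lmap, unc_transpose, reassoc_of% (F.str_natural _ X),
      ← Functor.map_comp_assoc, R_unc R X X, reassoc_of% (F.str_lam X)]
  have hn : (transposeτ R L X F Y f X ≫
        L.lmap (((R.adj X).homEquiv (𝟙_ V) X) (A.lam.hom.app X)) Y) ≫
        B.lam.inv.app ((L.lhom (𝟙_ V)).obj Y) =
      B.lam.inv.app (F.F.obj X) ≫ (B.act.obj (𝟙_ V)).map (transposeτ R L X F Y f X ≫
        L.lmap (((R.adj X).homEquiv (𝟙_ V) X) (A.lam.hom.app X)) Y) :=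
    B.lam.inv.naturality _
  rw [cloneCounit, ← Category.assoc, ← Category.assoc, hn, Category.assoc, hs]
  simp

lemma cloneStr_counit (Y : D) (a : C) :
    cloneStrU R L X Y ((R.rhom a).obj X) a ≫
        L.lmap (R.rmap (R.ev a X) X) Y ≫ cloneCounit R L X Y =
      L.ev ((R.rhom a).obj X) Y := by
  rw [cloneCounit, ← reassoc_of% (lmap_comp L
    (((R.adj X).homEquiv (𝟙_ V) X) (A.lam.hom.app X)) (R.rmap (R.ev a X) X) Y)]
  set k : 𝟙_ V ⟶ (R.rhom ((A.act.obj ((R.rhom a).obj X)).obj a)).obj X :=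
    ((R.adj X).homEquiv (𝟙_ V) X) (A.lam.hom.app X) ≫ R.rmap (R.ev a X) X with hk
  have hs : (B.act.obj (𝟙_ V)).map
        (cloneStrU R L X Y ((R.rhom a).obj X) a ≫ L.lmap k Y) ≫ L.ev (𝟙_ V) Y =
      B.lam.hom.app ((B.act.obj ((R.rhom a).obj X)).obj
          ((L.lhom ((R.rhom a).obj X)).obj Y)) ≫ L.ev ((R.rhom a).obj X) Y := by
    rw [unc_comp_lmap, unc_cloneStr]
    have key1 := assoc_inv_natural B k (𝟙 ((R.rhom a).obj X))
      ((L.lhom ((R.rhom a).obj X)).obj Y)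
    simp only [CategoryTheory.Functor.map_id, NatTrans.id_app, Category.id_comp] at key1
    rw [← reassoc_of% key1]
    have key2 : (B.act.map (k ⊗ₘ 𝟙 ((R.rhom a).obj X))).app
          ((L.lhom ((R.rhom a).obj X)).obj Y) ≫
          (B.act.map (hatg R X ((R.rhom a).obj X) a)).app
            ((L.lhom ((R.rhom a).obj X)).obj Y) =
        (B.act.map (λ_ ((R.rhom a).obj X)).hom).app
          ((L.lhom ((R.rhom a).obj X)).obj Y) := by
      rw [← NatTrans.comp_app, ← B.act.map_comp, hk, hatg_counit]
    rw [reassoc_of% key2, ← B.triangle_left]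
    simp
  have hn : (cloneStrU R L X Y ((R.rhom a).obj X) a ≫ L.lmap k Y) ≫
        B.lam.inv.app ((L.lhom (𝟙_ V)).obj Y) =
      B.lam.inv.app ((B.act.obj ((R.rhom a).obj X)).obj
          ((L.lhom ((R.rhom a).obj X)).obj Y)) ≫
        (B.act.obj (𝟙_ V)).map
          (cloneStrU R L X Y ((R.rhom a).obj X) a ≫ L.lmap k Y) :=
    B.lam.inv.naturality _
  rw [← Category.assoc, ← Category.assoc, hn, Category.assoc, hs]
  simp

lemma transpose_app (F : StrongFunctorB A B) (Y : D)
    (τ : F.F ⟶ (cloneF R L X Y).F) (hτ : IsStrongHomB F (cloneF R L X Y) τ) (a : C) :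
    transposeτ R L X F Y (τ.app X ≫ cloneCounit R L X Y) a = τ.app a := by
  apply L_ext L ((R.rhom a).obj X)
  erw [unc_transpose, reassoc_of% (τ.naturality (R.ev a X))]
  have h1 : (cloneF R L X Y).F.map (R.ev a X) = L.lmap (R.rmap (R.ev a X) X) Y := rfl
  have h2 : ((cloneF R L X Y).str ((R.rhom a).obj X)).app a =
      cloneStrU R L X Y ((R.rhom a).obj X) a := rfl
  erw [h1, ← reassoc_of% (hτ ((R.rhom a).obj X) a), h2, cloneStr_counit]
  rfl

lemma transpose_comp (F : StrongFunctorB A B) {Y Y' : D} (f : F.F.obj X ⟶ Y)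
    (g : Y ⟶ Y') (a : C) :
    transposeτ R L X F Y' (f ≫ g) a =
      transposeτ R L X F Y f a ≫ (L.lhom ((R.rhom a).obj X)).map g := by
  apply L_ext L ((R.rhom a).obj X)
  rw [unc_transpose, Functor.map_comp, Category.assoc, ev_natural,
    reassoc_of% (unc_transpose R L X F Y f a)]

/-- The clone adjunction `E_X ⊣ ⟨X,−⟩`. -/
def cloneAdj : evalAt A B X ⊣ cloneG R L X :=
  Adjunction.mkOfHomEquiv
    { homEquiv := fun F Y =>
        { toFun := fun f =>
            ⟨{ app := fun a => transposeτ R L X F Y f a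
               naturality := fun a b h => transpose_natural R L X F f h },
              fun v a => transpose_strong R L X F f v a⟩
          invFun := fun τ => τ.1.app X ≫ cloneCounit R L X Y
          left_inv := fun f => transpose_counit R L X F f
          right_inv := fun τ => Subtype.ext (by
            apply NatTrans.ext
            funext a
            exact transpose_app R L X F Y τ.1 τ.2 a) }
      homEquiv_naturality_left_symm := fun {F' F Y} ρ g => by
        show (ρ.1 ≫ g.1).app X ≫ cloneCounit R L X Y =
          ρ.1.app X ≫ g.1.app X ≫ cloneCounit R L X Y
        simp
        exact Category.assoc _ _ _
      homEquiv_naturality_right := fun {F Y Y'} f g => by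
        apply Subtype.ext
        apply NatTrans.ext
        funext a
        exact transpose_comp R L X F f g a }

end CloneAux

/-- **The clone adjunction** (Theorem 3.? of the paper).  Let `A` be a
right-closed `V`-action and `B` a left-closed `V`-action.  For every `X ∈ A`,
the evaluation-at-`X` functor `E_X : St(A,B) ⥤ B` has a right adjoint, the
clone functor `⟨X,−⟩`, sending `Y` to the strong functor
`a ↦ ⟦A̲(a,X),Y⟧` equipped with the clone strength. -/
theorem clone_adjunction (A : MonAction V C) (B : MonAction V D)
    (R : RightClosed A) (L : LeftClosed B) (X : C) :
    ∃ (G : D ⥤ StrongFunctorB A B)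
      (h : ∀ (Y : D) (a : C), (G.obj Y).F.obj a = cloneObjB R L X Y a),
      (∀ (v : V) (Y : D) (a : C),
        ((G.obj Y).str v).app a =
          eqToHom (congrArg (B.act.obj v).obj (h Y a)) ≫ cloneStrB R L X Y v a ≫
            eqToHom (h Y ((A.act.obj v).obj a)).symm) ∧
      Nonempty (evalAt A B X ⊣ G) := by
  refine ⟨cloneG R L X, fun Y a => rfl, fun v Y a => ?_, ⟨cloneAdj R L X⟩⟩
  erw [eqToHom_refl, eqToHom_refl, Category.id_comp, Category.comp_id]
  rfl

end MonEq
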